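/- Let o ∈ 𝒫^m_{ℓ+1} and let (r_n)_{n≥1} be any sequence of elements of ℛ. Define O_0 = O^ℓ_0 = O^1_0 = o, and for n ≥ 1 set O_n = Φ_O(O_{n−1}, r_n), O^ℓ_n = Φ_O^ℓ(O^ℓ_{n−1}, r_n) and O^1_n = Φ_O^1(O^1_{n−1}, r_n). Then for every n ≥ 0, O^ℓ_n ⪯ O_n ⪯ O^1_n. -/

import Mathlib

open Finset

noncomputable section

/-- The mutation map `ℳ_H`. -/
def calMH (ℓ κ : ℕ) (p : ℝ) (b : ℕ) (u : Fin ℓ → ℝ) : ℕ :=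
  b - (Finset.univ.filter (fun k : Fin ℓ => (k : ℕ) < b ∧ u k < p / (κ : ℝ))).card
    + (Finset.univ.filter
        (fun k : Fin ℓ => b ≤ (k : ℕ) ∧ 1 - p * (1 - 1 / (κ : ℝ)) < u k)).card

/-- The lumped fitness function `A_H`. -/
def AH (σ : ℝ) (b : ℕ) : ℝ := if b = 0 then σ else 1

/-- `o(k → l)`: move one chromosome from class `k` to class `l`. -/
def moveOcc (o : ℕ → ℕ) (k l : ℕ) : ℕ → ℕ :=
  Function.update (Function.update o k (o k - 1)) l
    (Function.update o k (o k - 1) l + 1)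

/-- `o` is an occupancy distribution of `m` chromosomes in classes `0,…,ℓ`. -/
def isOcc (ℓ m : ℕ) (o : ℕ → ℕ) : Prop :=
  (∀ h, ℓ < h → o h = 0) ∧ (∑ h ∈ Finset.range (ℓ + 1), o h) = m

/-- The partial order `⪯` on occupancy distributions. -/
def occLE (o o' : ℕ → ℕ) : Prop :=
  ∀ l, (∑ h ∈ Finset.range (l + 1), o h) ≤ ∑ h ∈ Finset.range (l + 1), o' h

/-- The coupling map `Φ_O`, given the selection map `SO` and the index map `K`. -/
def PhiO (ℓ κ : ℕ) (p : ℝ) (SO : (ℕ → ℕ) → ℝ → ℕ) (K : (ℕ → ℕ) → ℕ → ℕ)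
    (o : ℕ → ℕ) (s : ℝ) (j : ℕ) (u : Fin ℓ → ℝ) : ℕ → ℕ :=
  moveOcc o (K o j) (calMH ℓ κ p (SO o s) u)

/-- The projection `π_ℓ(o) = (o(0),0,…,0,m−o(0))`. -/
def piL (ℓ m : ℕ) (o : ℕ → ℕ) : ℕ → ℕ :=
  fun h => if h = 0 then o 0 else if h = ℓ then m - o 0 else 0

/-- The projection `π_1(o) = (o(0),m−o(0),0,…,0)`. -/
def pi1 (m : ℕ) (o : ℕ → ℕ) : ℕ → ℕ :=
  fun h => if h = 0 then o 0 else if h = 1 then m - o 0 else 0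

/-- The lower coupling map `Φ_O^ℓ`. -/
def PhiOL (ℓ m κ : ℕ) (p : ℝ) (SO : (ℕ → ℕ) → ℝ → ℕ) (K : (ℕ → ℕ) → ℕ → ℕ)
    (o : ℕ → ℕ) (s : ℝ) (j : ℕ) (u : Fin ℓ → ℝ) : ℕ → ℕ :=
  if o 0 = 0 then
    (if PhiO ℓ κ p SO K o s j u 0 = 0 then PhiO ℓ κ p SO K o s j u
     else piL ℓ m (PhiO ℓ κ p SO K o s j u))
  else piL ℓ m (PhiO ℓ κ p SO K (piL ℓ m o) s j u)

/-- The upper coupling map `Φ_O^1`. -/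
def PhiOU (ℓ m κ : ℕ) (p : ℝ) (SO : (ℕ → ℕ) → ℝ → ℕ) (K : (ℕ → ℕ) → ℕ → ℕ)
    (o : ℕ → ℕ) (s : ℝ) (j : ℕ) (u : Fin ℓ → ℝ) : ℕ → ℕ :=
  if o 0 = 0 then
    (if PhiO ℓ κ p SO K o s j u 0 = 0 then PhiO ℓ κ p SO K o s j u
     else pi1 m (PhiO ℓ κ p SO K o s j u))
  else pi1 m (PhiO ℓ κ p SO K (pi1 m o) s j u)







def Sm (o : ℕ → ℕ) (n : ℕ) : ℕ := ∑ h ∈ Finset.range n, o h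

def SmLE (o o' : ℕ → ℕ) : Prop := ∀ n, Sm o n ≤ Sm o' n

lemma Sm_succ (o : ℕ → ℕ) (n : ℕ) : Sm o (n + 1) = Sm o n + o n := by
  simp [Sm, Finset.sum_range_succ]

lemma Sm_one (o : ℕ → ℕ) : Sm o 1 = o 0 := by simp [Sm]

lemma Sm_mono (o : ℕ → ℕ) : Monotone (Sm o) := by
  intro a b hab
  exact Finset.sum_le_sum_of_subset (Finset.range_subset_range.2 hab)

lemma Sm_stable {ℓ m : ℕ} {o : ℕ → ℕ} (ho : isOcc ℓ m o) :
    ∀ n, ℓ + 1 ≤ n → Sm o n = m := by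
  intro n hn
  induction n, hn using Nat.le_induction with
  | base => exact ho.2
  | succ n hn ih => rw [Sm_succ, ih, ho.1 n (by omega)]; omega

lemma Sm_le_m {ℓ m : ℕ} {o : ℕ → ℕ} (ho : isOcc ℓ m o) (n : ℕ) : Sm o n ≤ m := by
  rcases le_or_gt n (ℓ + 1) with h | h
  · calc Sm o n ≤ Sm o (ℓ + 1) := Sm_mono o h
    _ = m := ho.2
  · rw [Sm_stable ho n (by omega)]

lemma o0_le_m {ℓ m : ℕ} {o : ℕ → ℕ} (ho : isOcc ℓ m o) : o 0 ≤ m := by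
  have := Sm_le_m ho 1
  rwa [Sm_one] at this

/-! ### moveOcc -/

lemma moveOcc_point {o : ℕ → ℕ} {k : ℕ} (l : ℕ) (h1 : 1 ≤ o k) (h : ℕ) :
    moveOcc o k l h + (if h = k then 1 else 0) = o h + (if h = l then 1 else 0) := by
  simp only [moveOcc, Function.update_apply]
  split_ifs <;> subst_vars <;> omega

lemma moveOcc_other {o : ℕ → ℕ} {k l h : ℕ} (hk : h ≠ k) (hl : h ≠ l) :
    moveOcc o k l h = o h := by
  simp only [moveOcc, Function.update_apply, if_neg hk, if_neg hl]

lemma Sm_moveOcc {o : ℕ → ℕ} {k : ℕ} (l : ℕ) (h1 : 1 ≤ o k) (n : ℕ) :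
    Sm (moveOcc o k l) n + (if k < n then 1 else 0)
      = Sm o n + (if l < n then 1 else 0) := by
  have e1 : ∀ a : ℕ, (∑ h ∈ Finset.range n, if h = a then 1 else 0)
      = if a < n then 1 else 0 := by
    intro a
    rw [Finset.sum_ite_eq' (Finset.range n) a (fun _ => 1)]
    simp [Finset.mem_range]
  calc Sm (moveOcc o k l) n + (if k < n then 1 else 0)
      = ∑ h ∈ Finset.range n, (moveOcc o k l h + if h = k then 1 else 0) := by
        rw [Finset.sum_add_distrib, e1]; rfl
    _ = ∑ h ∈ Finset.range n, (o h + if h = l then 1 else 0) := by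
        exact Finset.sum_congr rfl fun h _ => moveOcc_point l h1 h
    _ = Sm o n + (if l < n then 1 else 0) := by rw [Finset.sum_add_distrib, e1]; rfl

/-! ### calMH -/

lemma card_filter_lt_le {ℓ : ℕ} (b : ℕ) (P : Fin ℓ → Prop) [DecidablePred P] :
    (Finset.univ.filter (fun k : Fin ℓ => (k : ℕ) < b ∧ P k)).card ≤ b := by
  have := Finset.card_le_card_of_injOn (fun k : Fin ℓ => (k : ℕ))
    (s := Finset.univ.filter (fun k : Fin ℓ => (k : ℕ) < b ∧ P k)) (t := Finset.range b)
    (by intro a ha; simp only [Finset.mem_coe, Finset.mem_filter] at ha; simpa using ha.2.1)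
    (fun x _ y _ h => Fin.val_injective h)
  simpa using this

lemma card_filter_ge_le {ℓ : ℕ} (b : ℕ) (P : Fin ℓ → Prop) [DecidablePred P] :
    (Finset.univ.filter (fun k : Fin ℓ => b ≤ (k : ℕ) ∧ P k)).card ≤ ℓ - b := by
  have := Finset.card_le_card_of_injOn (fun k : Fin ℓ => (k : ℕ))
    (s := Finset.univ.filter (fun k : Fin ℓ => b ≤ (k : ℕ) ∧ P k)) (t := Finset.Ico b ℓ)
    (by intro a ha; simp only [Finset.mem_coe, Finset.mem_filter] at ha
        simp [Finset.mem_Ico, ha.2.1, a.isLt])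
    (fun x _ y _ h => Fin.val_injective h)
  simpa using this

lemma calMH_succ_mono {ℓ κ : ℕ} {p : ℝ} (hκ : 2 ≤ κ) (hp1 : p < 1)
    (u : Fin ℓ → ℝ) (b : ℕ) : calMH ℓ κ p b u ≤ calMH ℓ κ p (b + 1) u := by
  classical
  have hdisj : ∀ k : Fin ℓ, ¬ (u k < p / κ ∧ 1 - p * (1 - 1 / (κ : ℝ)) < u k) := by
    rintro k ⟨h1, h2⟩
    have h3 : p * (1 - 1 / (κ : ℝ)) = p - p / κ := by ring
    linarith
  by_cases hb : ℓ ≤ b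
  · have e1 : (Finset.univ.filter (fun k : Fin ℓ => (k : ℕ) < b + 1 ∧ u k < p / κ))
        = Finset.univ.filter (fun k : Fin ℓ => (k : ℕ) < b ∧ u k < p / κ) := by
      apply Finset.filter_congr
      intro k _
      have := k.isLt
      constructor <;> rintro ⟨h, h2⟩ <;> exact ⟨by omega, h2⟩
    have e2 : (Finset.univ.filter
          (fun k : Fin ℓ => b + 1 ≤ (k : ℕ) ∧ 1 - p * (1 - 1 / (κ : ℝ)) < u k))
        = Finset.univ.filter
          (fun k : Fin ℓ => b ≤ (k : ℕ) ∧ 1 - p * (1 - 1 / (κ : ℝ)) < u k) := by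
      apply Finset.filter_congr
      intro k _
      have := k.isLt
      constructor <;> rintro ⟨h, h2⟩ <;> omega
    unfold calMH
    rw [e1, e2]
    omega
  · push_neg at hb
    set kb : Fin ℓ := ⟨b, hb⟩ with hkb
    set D := (Finset.univ.filter (fun k : Fin ℓ => (k : ℕ) < b ∧ u k < p / κ)).card with hD
    set D' := (Finset.univ.filter (fun k : Fin ℓ => (k : ℕ) < b + 1 ∧ u k < p / κ)).card with hD'
    set G := (Finset.univ.filter
      (fun k : Fin ℓ => b ≤ (k : ℕ) ∧ 1 - p * (1 - 1 / (κ : ℝ)) < u k)).card with hG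
    set G' := (Finset.univ.filter
      (fun k : Fin ℓ => b + 1 ≤ (k : ℕ) ∧ 1 - p * (1 - 1 / (κ : ℝ)) < u k)).card with hG'
    have hDb : D ≤ b := card_filter_lt_le b _
    have hDmono : D ≤ D' := by
      apply Finset.card_le_card
      intro k hk
      simp only [Finset.mem_filter] at hk ⊢
      exact ⟨hk.1, by omega, hk.2.2⟩
    have hGmono : G' ≤ G := by
      apply Finset.card_le_card
      intro k hk
      simp only [Finset.mem_filter] at hk ⊢
      exact ⟨hk.1, by omega, hk.2.2⟩
    have hD1 : D' ≤ D + (if u kb < p / κ then 1 else 0) := by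
      split_ifs with hskb
      · calc D' ≤ (insert kb (Finset.univ.filter
              (fun k : Fin ℓ => (k : ℕ) < b ∧ u k < p / κ))).card := by
              apply Finset.card_le_card
              intro k hk
              simp only [Finset.mem_filter] at hk
              rcases Nat.lt_succ_iff_lt_or_eq.1 hk.2.1 with h | h
              · exact Finset.mem_insert_of_mem (by simp [Finset.mem_filter, h, hk.2.2])
              · have : k = kb := Fin.ext h
                simp [this]
          _ ≤ D + 1 := Finset.card_insert_le _ _
      · have : (Finset.univ.filter (fun k : Fin ℓ => (k : ℕ) < b + 1 ∧ u k < p / κ))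
            = Finset.univ.filter (fun k : Fin ℓ => (k : ℕ) < b ∧ u k < p / κ) := by
          ext k
          simp only [Finset.mem_filter]
          constructor
          · rintro ⟨h1, h2, h3⟩
            refine ⟨h1, ?_, h3⟩
            rcases Nat.lt_succ_iff_lt_or_eq.1 h2 with h | h
            · exact h
            · exact absurd h3 (by rw [show k = kb from Fin.ext h]; exact hskb)
          · rintro ⟨h1, h2, h3⟩
            exact ⟨h1, by omega, h3⟩
        rw [hD', hD, this]; omega
    have hG1 : G ≤ G' + (if 1 - p * (1 - 1 / (κ : ℝ)) < u kb then 1 else 0) := by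
      split_ifs with hgkb
      · calc G ≤ (insert kb (Finset.univ.filter
              (fun k : Fin ℓ => b + 1 ≤ (k : ℕ) ∧ 1 - p * (1 - 1 / (κ : ℝ)) < u k))).card := by
              apply Finset.card_le_card
              intro k hk
              simp only [Finset.mem_filter] at hk
              rcases eq_or_lt_of_le hk.2.1 with h | h
              · have : k = kb := Fin.ext h.symm
                simp [this]
              · refine Finset.mem_insert_of_mem ?_
                simp only [Finset.mem_filter, Finset.mem_univ, true_and]
                exact ⟨by omega, hk.2.2⟩
          _ ≤ G' + 1 := Finset.card_insert_le _ _
      · have : (Finset.univ.filter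
            (fun k : Fin ℓ => b ≤ (k : ℕ) ∧ 1 - p * (1 - 1 / (κ : ℝ)) < u k))
            = Finset.univ.filter
              (fun k : Fin ℓ => b + 1 ≤ (k : ℕ) ∧ 1 - p * (1 - 1 / (κ : ℝ)) < u k) := by
          ext k
          simp only [Finset.mem_filter]
          constructor
          · rintro ⟨h1, h2, h3⟩
            refine ⟨h1, ?_, h3⟩
            rcases eq_or_lt_of_le h2 with h | h
            · exact absurd h3 (by rw [show k = kb from Fin.ext h.symm]; exact hgkb)
            · omega
          · rintro ⟨h1, h2, h3⟩
            exact ⟨h1, by omega, h3⟩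
        rw [hG, hG', this]; omega
    unfold calMH
    rw [← hD, ← hD', ← hG, ← hG']
    split_ifs at hD1 hG1 with h1 h2
    · exact absurd ⟨h1, h2⟩ (hdisj kb)
    · omega
    · omega
    · omega

lemma calMH_mono {ℓ κ : ℕ} {p : ℝ} (hκ : 2 ≤ κ) (hp1 : p < 1)
    (u : Fin ℓ → ℝ) {b b' : ℕ} (h : b ≤ b') : calMH ℓ κ p b u ≤ calMH ℓ κ p b' u :=
  monotone_nat_of_le_succ (calMH_succ_mono hκ hp1 u) h

lemma calMH_le {ℓ κ : ℕ} {p : ℝ} (u : Fin ℓ → ℝ) {b : ℕ} (hb : b ≤ ℓ) :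
    calMH ℓ κ p b u ≤ ℓ := by
  have h1 := card_filter_ge_le (ℓ := ℓ) b
    (fun k : Fin ℓ => 1 - p * (1 - 1 / (κ : ℝ)) < u k)
  unfold calMH
  omega

/-! ### fitness sums -/

def Fw (σ : ℝ) (o : ℕ → ℕ) (n : ℕ) : ℝ := ∑ h ∈ Finset.range n, (o h : ℝ) * AH σ h

lemma AH_nonneg {σ : ℝ} (hσ : 1 ≤ σ) (h : ℕ) : 0 ≤ AH σ h := by
  unfold AH; split <;> linarith

lemma Fw_mono {σ : ℝ} (hσ : 1 ≤ σ) (o : ℕ → ℕ) {a b : ℕ} (hab : a ≤ b) :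
    Fw σ o a ≤ Fw σ o b := by
  apply Finset.sum_le_sum_of_subset_of_nonneg (Finset.range_subset_range.2 hab)
  intro h _ _
  exact mul_nonneg (by positivity) (AH_nonneg hσ h)

lemma Fw_eq (σ : ℝ) (o : ℕ → ℕ) : ∀ n, 1 ≤ n →
    Fw σ o n = (σ - 1) * (o 0 : ℝ) + (Sm o n : ℝ) := by
  intro n hn
  induction n, hn using Nat.le_induction with
  | base => simp [Fw, Sm, AH]; ring
  | succ n hn ih =>
      rw [show Fw σ o (n + 1) = Fw σ o n + (o n : ℝ) * AH σ n from
        Finset.sum_range_succ _ n, ih, Sm_succ]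
      have : AH σ n = 1 := by unfold AH; rw [if_neg (by omega)]
      rw [this]
      push_cast
      ring

lemma Fw_stable {ℓ m : ℕ} {σ : ℝ} {o : ℕ → ℕ} (ho : isOcc ℓ m o) {n : ℕ}
    (hn : ℓ + 1 ≤ n) : Fw σ o n = Fw σ o (ℓ + 1) := by
  rw [Fw_eq σ o n (by omega), Fw_eq σ o (ℓ + 1) (by omega),
    Sm_stable ho n hn, Sm_stable ho (ℓ + 1) le_rfl]

lemma T_ge_one {ℓ m : ℕ} {σ : ℝ} (hσ : 1 ≤ σ) (hm : 1 ≤ m) {o : ℕ → ℕ}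
    (ho : isOcc ℓ m o) : (1 : ℝ) ≤ Fw σ o (ℓ + 1) := by
  rw [Fw_eq σ o (ℓ + 1) (by omega), Sm_stable ho (ℓ + 1) le_rfl]
  have h1 : (1 : ℝ) ≤ (m : ℝ) := by exact_mod_cast hm
  nlinarith [mul_nonneg (sub_nonneg.2 hσ) (Nat.cast_nonneg (o 0))]

lemma frac_mono {ℓ m : ℕ} {σ : ℝ} (hσ : 1 ≤ σ) {o o' : ℕ → ℕ}
    (ho : isOcc ℓ m o) (ho' : isOcc ℓ m o') (hle : SmLE o o') {n : ℕ} (hn : 1 ≤ n) :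
    Fw σ o n * Fw σ o' (ℓ + 1) ≤ Fw σ o' n * Fw σ o (ℓ + 1) := by
  rw [Fw_eq σ o n hn, Fw_eq σ o' n hn, Fw_eq σ o (ℓ + 1) (by omega),
    Fw_eq σ o' (ℓ + 1) (by omega), Sm_stable ho (ℓ + 1) le_rfl,
    Sm_stable ho' (ℓ + 1) le_rfl]
  have h1 : o 0 ≤ o' 0 := by have := hle 1; rwa [Sm_one, Sm_one] at this
  have h2 : Sm o n ≤ Sm o' n := hle n
  have h3 : Sm o n ≤ m := Sm_le_m ho n
  have h4 : Sm o' n ≤ m := Sm_le_m ho' n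
  have c1 : (o 0 : ℝ) ≤ (o' 0 : ℝ) := by exact_mod_cast h1
  have c2 : (Sm o n : ℝ) ≤ (Sm o' n : ℝ) := by exact_mod_cast h2
  have c3 : (Sm o n : ℝ) ≤ (m : ℝ) := by exact_mod_cast h3
  have c4 : (Sm o' n : ℝ) ≤ (m : ℝ) := by exact_mod_cast h4
  have key : (o 0 : ℝ) * ((m : ℝ) - (Sm o' n : ℝ))
      ≤ (o' 0 : ℝ) * ((m : ℝ) - (Sm o n : ℝ)) := by
    apply mul_le_mul c1 (by linarith) (by linarith) (by positivity)
  nlinarith [mul_nonneg (sub_nonneg.2 hσ) (sub_nonneg.2 key),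
    mul_nonneg (Nat.cast_nonneg m (α := ℝ)) (sub_nonneg.2 c2)]

lemma SO_le_ell {ℓ m : ℕ} {σ : ℝ} (hσ : 1 ≤ σ) (hm : 1 ≤ m) {o : ℕ → ℕ}
    (ho : isOcc ℓ m o) {s : ℝ} (hs0 : 0 ≤ s) (hs1 : s < 1) {l : ℕ}
    (h1 : Fw σ o l ≤ s * Fw σ o (ℓ + 1)) : l ≤ ℓ := by
  by_contra hl
  push_neg at hl
  rw [Fw_stable ho (by omega)] at h1
  have hT := T_ge_one hσ hm ho
  nlinarith

lemma sel_mono {ℓ m : ℕ} {σ : ℝ} (hσ : 1 ≤ σ) (hm : 1 ≤ m) {o o' : ℕ → ℕ}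
    (ho : isOcc ℓ m o) (ho' : isOcc ℓ m o') (hle : SmLE o o') {s : ℝ}
    {l l' : ℕ}
    (hB : s * Fw σ o (ℓ + 1) < Fw σ o (l + 1))
    (hA' : Fw σ o' l' ≤ s * Fw σ o' (ℓ + 1)) : l' ≤ l := by
  by_contra hc
  push_neg at hc
  have h1 : Fw σ o' (l + 1) ≤ Fw σ o' l' := Fw_mono hσ o' (by omega)
  have hfrac := frac_mono hσ ho ho' hle (n := l + 1) (by omega)
  have hT := T_ge_one hσ hm ho
  have hT' := T_ge_one hσ hm ho'
  nlinarith [mul_le_mul_of_nonneg_right (le_trans h1 hA')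
      (by linarith : (0:ℝ) ≤ Fw σ o (ℓ + 1)),
    mul_lt_mul_of_pos_right hB (by linarith : (0:ℝ) < Fw σ o' (ℓ + 1))]

/-! ### projections -/



lemma Sm_piL {ℓ m : ℕ} (hℓ : 1 ≤ ℓ) (o : ℕ → ℕ) (n : ℕ) :
    Sm (piL ℓ m o) n = if n = 0 then 0 else if n ≤ ℓ then o 0 else o 0 + (m - o 0) := by
  induction n with
  | zero => simp [Sm]
  | succ n ih =>
      rw [Sm_succ, ih,
        show piL ℓ m o n = if n = 0 then o 0 else if n = ℓ then m - o 0 else 0 from rfl]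
      split_ifs <;> first | contradiction | omega

lemma Sm_pi1 {m : ℕ} (o : ℕ → ℕ) (n : ℕ) :
    Sm (pi1 m o) n = if n = 0 then 0 else if n = 1 then o 0 else o 0 + (m - o 0) := by
  induction n with
  | zero => simp [Sm]
  | succ n ih =>
      rw [Sm_succ, ih,
        show pi1 m o n = if n = 0 then o 0 else if n = 1 then m - o 0 else 0 from rfl]
      split_ifs <;> first | contradiction | omega

lemma piL_isOcc {ℓ m : ℕ} (hℓ : 1 ≤ ℓ) {o : ℕ → ℕ} (ho : isOcc ℓ m o) :
    isOcc ℓ m (piL ℓ m o) := by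
  have h0 := o0_le_m ho
  constructor
  · intro h hh
    show (if h = 0 then o 0 else if h = ℓ then m - o 0 else 0) = 0
    rw [if_neg (by omega), if_neg (by omega)]
  · show Sm (piL ℓ m o) (ℓ + 1) = m
    rw [Sm_piL hℓ, if_neg (by omega), if_neg (by omega)]
    omega

lemma pi1_isOcc {ℓ m : ℕ} (hℓ : 1 ≤ ℓ) {o : ℕ → ℕ} (ho : isOcc ℓ m o) :
    isOcc ℓ m (pi1 m o) := by
  have h0 := o0_le_m ho
  constructor
  · intro h hh
    show (if h = 0 then o 0 else if h = 1 then m - o 0 else 0) = 0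
    rw [if_neg (by omega), if_neg (by omega)]
  · show Sm (pi1 m o) (ℓ + 1) = m
    rw [Sm_pi1, if_neg (by omega), if_neg (by omega)]
    omega

lemma piL_le {ℓ m : ℕ} (hℓ : 1 ≤ ℓ) {o : ℕ → ℕ} (ho : isOcc ℓ m o) :
    SmLE (piL ℓ m o) o := by
  intro n
  rw [Sm_piL hℓ]
  rcases Nat.eq_zero_or_pos n with h | h
  · simp [h]
  · have h1 : o 0 ≤ Sm o n := by rw [← Sm_one o]; exact Sm_mono o h
    have h2 := o0_le_m ho
    rcases le_or_gt n ℓ with h3 | h3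
    · rw [if_neg (by omega), if_pos h3]; exact h1
    · rw [if_neg (by omega), if_neg (by omega), Sm_stable ho n (by omega)]; omega

lemma le_pi1 {ℓ m : ℕ} {o : ℕ → ℕ} (ho : isOcc ℓ m o) :
    SmLE o (pi1 m o) := by
  intro n
  rw [Sm_pi1]
  have h2 := o0_le_m ho
  have h3 := Sm_le_m ho n
  rcases Nat.eq_zero_or_pos n with h | h
  · simp [h, Sm]
  · rcases eq_or_lt_of_le (show 1 ≤ n from h) with h4 | h4
    · rw [if_neg (by omega), if_pos (by omega), ← h4, Sm_one]
    · rw [if_neg (by omega), if_neg (by omega)]; omega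





section core

variable {ℓ m κ : ℕ} {p σ : ℝ}
  {SO : (ℕ → ℕ) → ℝ → ℕ} {K : (ℕ → ℕ) → ℕ → ℕ}

lemma K_facts
    (hK : ∀ (o : ℕ → ℕ) (j : ℕ), isOcc ℓ m o → 1 ≤ j → j ≤ m →
      (∑ h ∈ Finset.range (K o j), o h) < j ∧
        j ≤ ∑ h ∈ Finset.range (K o j + 1), o h)
    {o : ℕ → ℕ} (ho : isOcc ℓ m o) {j : ℕ} (hj1 : 1 ≤ j) (hjm : j ≤ m) :
    K o j ≤ ℓ ∧ 1 ≤ o (K o j) := by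
  obtain ⟨h1, h2⟩ := hK o j ho hj1 hjm
  have h1' : Sm o (K o j) < j := h1
  have h2' : j ≤ Sm o (K o j + 1) := h2
  have h3 : Sm o (K o j + 1) = Sm o (K o j) + o (K o j) := Sm_succ o _
  have hm2 : Sm o (ℓ + 1) = m := ho.2
  constructor
  · by_contra hc
    push_neg at hc
    have := Sm_mono o (show ℓ + 1 ≤ K o j by omega)
    omega
  · omega

lemma SO_facts (hσ : 1 ≤ σ) (hm : 1 ≤ m)
    (hSO : ∀ (o : ℕ → ℕ) (s : ℝ), isOcc ℓ m o → 0 ≤ s → s < 1 →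
      (∑ h ∈ Finset.range (SO o s), (o h : ℝ) * AH σ h)
          ≤ s * ∑ h ∈ Finset.range (ℓ + 1), (o h : ℝ) * AH σ h ∧
        s * (∑ h ∈ Finset.range (ℓ + 1), (o h : ℝ) * AH σ h)
          < ∑ h ∈ Finset.range (SO o s + 1), (o h : ℝ) * AH σ h)
    {o : ℕ → ℕ} (ho : isOcc ℓ m o) {s : ℝ} (hs0 : 0 ≤ s) (hs1 : s < 1) :
    SO o s ≤ ℓ := by
  have hA : Fw σ o (SO o s) ≤ s * Fw σ o (ℓ + 1) := (hSO o s ho hs0 hs1).1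
  exact SO_le_ell hσ hm ho hs0 hs1 hA

lemma PhiO_isOcc (hℓ : 1 ≤ ℓ) (hm : 1 ≤ m) (hσ : 1 ≤ σ)
    (hSO : ∀ (o : ℕ → ℕ) (s : ℝ), isOcc ℓ m o → 0 ≤ s → s < 1 →
      (∑ h ∈ Finset.range (SO o s), (o h : ℝ) * AH σ h)
          ≤ s * ∑ h ∈ Finset.range (ℓ + 1), (o h : ℝ) * AH σ h ∧
        s * (∑ h ∈ Finset.range (ℓ + 1), (o h : ℝ) * AH σ h)
          < ∑ h ∈ Finset.range (SO o s + 1), (o h : ℝ) * AH σ h)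
    (hK : ∀ (o : ℕ → ℕ) (j : ℕ), isOcc ℓ m o → 1 ≤ j → j ≤ m →
      (∑ h ∈ Finset.range (K o j), o h) < j ∧
        j ≤ ∑ h ∈ Finset.range (K o j + 1), o h)
    {o : ℕ → ℕ} (ho : isOcc ℓ m o) {s : ℝ} {j : ℕ} {u : Fin ℓ → ℝ}
    (hs0 : 0 ≤ s) (hs1 : s < 1) (hj1 : 1 ≤ j) (hjm : j ≤ m) :
    isOcc ℓ m (PhiO ℓ κ p SO K o s j u) := by
  obtain ⟨hkℓ, hok⟩ := K_facts hK ho hj1 hjm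
  have hbl : SO o s ≤ ℓ := SO_facts hσ hm hSO ho hs0 hs1
  have hcl : calMH ℓ κ p (SO o s) u ≤ ℓ := calMH_le u hbl
  constructor
  · intro h hh
    show moveOcc o (K o j) (calMH ℓ κ p (SO o s) u) h = 0
    rw [moveOcc_other (by omega) (by omega)]
    exact ho.1 h hh
  · show Sm (moveOcc o (K o j) (calMH ℓ κ p (SO o s) u)) (ℓ + 1) = m
    have h1 := Sm_moveOcc (calMH ℓ κ p (SO o s) u) hok (ℓ + 1)
    rw [if_pos (by omega), if_pos (by omega)] at h1
    have hm2 : Sm o (ℓ + 1) = m := ho.2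
    omega

lemma PhiO_mono (hℓ : 1 ≤ ℓ) (hm : 1 ≤ m) (hκ : 2 ≤ κ) (hp1 : p < 1) (hσ : 1 ≤ σ)
    (hSO : ∀ (o : ℕ → ℕ) (s : ℝ), isOcc ℓ m o → 0 ≤ s → s < 1 →
      (∑ h ∈ Finset.range (SO o s), (o h : ℝ) * AH σ h)
          ≤ s * ∑ h ∈ Finset.range (ℓ + 1), (o h : ℝ) * AH σ h ∧
        s * (∑ h ∈ Finset.range (ℓ + 1), (o h : ℝ) * AH σ h)
          < ∑ h ∈ Finset.range (SO o s + 1), (o h : ℝ) * AH σ h)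
    (hK : ∀ (o : ℕ → ℕ) (j : ℕ), isOcc ℓ m o → 1 ≤ j → j ≤ m →
      (∑ h ∈ Finset.range (K o j), o h) < j ∧
        j ≤ ∑ h ∈ Finset.range (K o j + 1), o h)
    {o o' : ℕ → ℕ} (ho : isOcc ℓ m o) (ho' : isOcc ℓ m o') (hle : SmLE o o')
    {s : ℝ} {j : ℕ} {u : Fin ℓ → ℝ}
    (hs0 : 0 ≤ s) (hs1 : s < 1) (hj1 : 1 ≤ j) (hjm : j ≤ m) :
    SmLE (PhiO ℓ κ p SO K o s j u) (PhiO ℓ κ p SO K o' s j u) := by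
  intro n
  have hB : s * Fw σ o (ℓ + 1) < Fw σ o (SO o s + 1) := (hSO o s ho hs0 hs1).2
  have hA' : Fw σ o' (SO o' s) ≤ s * Fw σ o' (ℓ + 1) := (hSO o' s ho' hs0 hs1).1
  have hsel : SO o' s ≤ SO o s := sel_mono hσ hm ho ho' hle hB hA'
  have hll : calMH ℓ κ p (SO o' s) u ≤ calMH ℓ κ p (SO o s) u :=
    calMH_mono hκ hp1 u hsel
  obtain ⟨hkℓ, hok⟩ := K_facts hK ho hj1 hjm
  obtain ⟨hkℓ', hok'⟩ := K_facts hK ho' hj1 hjm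
  have h1 := Sm_moveOcc (calMH ℓ κ p (SO o s) u) hok n
  have h2 := Sm_moveOcc (calMH ℓ κ p (SO o' s) u) hok' n
  have hKo : Sm o (K o j) < j := (hK o j ho hj1 hjm).1
  have hKo' : j ≤ Sm o' (K o' j + 1) := (hK o' j ho' hj1 hjm).2
  have hcomp : ¬ (K o' j < n) ∨ (K o j < n) ∨ Sm o n + 1 ≤ Sm o' n := by
    by_cases hc1 : K o' j < n
    · by_cases hc2 : K o j < n
      · tauto
      · right; right
        push_neg at hc2
        have e1 : Sm o n ≤ Sm o (K o j) := Sm_mono o hc2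
        have e2 : Sm o' (K o' j + 1) ≤ Sm o' n := Sm_mono o' (by omega)
        omega
    · tauto
  have hlen := hle n
  show Sm (moveOcc o (K o j) (calMH ℓ κ p (SO o s) u)) n
    ≤ Sm (moveOcc o' (K o' j) (calMH ℓ κ p (SO o' s) u)) n
  split_ifs at h1 h2 <;> omega

end core

section steps

variable {ℓ m κ : ℕ} {p σ : ℝ}
  {SO : (ℕ → ℕ) → ℝ → ℕ} {K : (ℕ → ℕ) → ℕ → ℕ}

lemma lower_step (hℓ : 1 ≤ ℓ) (hm : 1 ≤ m) (hκ : 2 ≤ κ) (hp1 : p < 1) (hσ : 1 ≤ σ)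
    (hSO : ∀ (o : ℕ → ℕ) (s : ℝ), isOcc ℓ m o → 0 ≤ s → s < 1 →
      (∑ h ∈ Finset.range (SO o s), (o h : ℝ) * AH σ h)
          ≤ s * ∑ h ∈ Finset.range (ℓ + 1), (o h : ℝ) * AH σ h ∧
        s * (∑ h ∈ Finset.range (ℓ + 1), (o h : ℝ) * AH σ h)
          < ∑ h ∈ Finset.range (SO o s + 1), (o h : ℝ) * AH σ h)
    (hK : ∀ (o : ℕ → ℕ) (j : ℕ), isOcc ℓ m o → 1 ≤ j → j ≤ m →
      (∑ h ∈ Finset.range (K o j), o h) < j ∧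
        j ≤ ∑ h ∈ Finset.range (K o j + 1), o h)
    {oL o : ℕ → ℕ} (hoL : isOcc ℓ m oL) (ho : isOcc ℓ m o) (hle : SmLE oL o)
    {s : ℝ} {j : ℕ} {u : Fin ℓ → ℝ}
    (hs0 : 0 ≤ s) (hs1 : s < 1) (hj1 : 1 ≤ j) (hjm : j ≤ m) :
    isOcc ℓ m (PhiOL ℓ m κ p SO K oL s j u) ∧
      SmLE (PhiOL ℓ m κ p SO K oL s j u) (PhiO ℓ κ p SO K o s j u) := by
  have hmono := PhiO_mono (σ := σ) (u := u) hℓ hm hκ hp1 hσ hSO hK hoL ho hle hs0 hs1 hj1 hjm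
  have hPocc := PhiO_isOcc (σ := σ) (p := p) (κ := κ) (u := u) hℓ hm hσ hSO hK hoL hs0 hs1 hj1 hjm
  unfold PhiOL
  by_cases h0 : oL 0 = 0
  · rw [if_pos h0]
    by_cases h1 : PhiO ℓ κ p SO K oL s j u 0 = 0
    · rw [if_pos h1]
      exact ⟨hPocc, hmono⟩
    · rw [if_neg h1]
      exact ⟨piL_isOcc hℓ hPocc,
        fun n => le_trans (piL_le hℓ hPocc n) (hmono n)⟩
  · rw [if_neg h0]
    have hpo : isOcc ℓ m (piL ℓ m oL) := piL_isOcc hℓ hoL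
    have hle2 : SmLE (piL ℓ m oL) o := fun n => le_trans (piL_le hℓ hoL n) (hle n)
    have hmono2 := PhiO_mono (σ := σ) (u := u) hℓ hm hκ hp1 hσ hSO hK hpo ho hle2 hs0 hs1 hj1 hjm
    have hPocc2 := PhiO_isOcc (σ := σ) (p := p) (κ := κ) (u := u) hℓ hm hσ hSO hK hpo hs0 hs1 hj1 hjm
    exact ⟨piL_isOcc hℓ hPocc2,
      fun n => le_trans (piL_le hℓ hPocc2 n) (hmono2 n)⟩

lemma upper_step (hℓ : 1 ≤ ℓ) (hm : 1 ≤ m) (hκ : 2 ≤ κ) (hp1 : p < 1) (hσ : 1 ≤ σ)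
    (hSO : ∀ (o : ℕ → ℕ) (s : ℝ), isOcc ℓ m o → 0 ≤ s → s < 1 →
      (∑ h ∈ Finset.range (SO o s), (o h : ℝ) * AH σ h)
          ≤ s * ∑ h ∈ Finset.range (ℓ + 1), (o h : ℝ) * AH σ h ∧
        s * (∑ h ∈ Finset.range (ℓ + 1), (o h : ℝ) * AH σ h)
          < ∑ h ∈ Finset.range (SO o s + 1), (o h : ℝ) * AH σ h)
    (hK : ∀ (o : ℕ → ℕ) (j : ℕ), isOcc ℓ m o → 1 ≤ j → j ≤ m →
      (∑ h ∈ Finset.range (K o j), o h) < j ∧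
        j ≤ ∑ h ∈ Finset.range (K o j + 1), o h)
    {o oU : ℕ → ℕ} (ho : isOcc ℓ m o) (hoU : isOcc ℓ m oU) (hle : SmLE o oU)
    {s : ℝ} {j : ℕ} {u : Fin ℓ → ℝ}
    (hs0 : 0 ≤ s) (hs1 : s < 1) (hj1 : 1 ≤ j) (hjm : j ≤ m) :
    isOcc ℓ m (PhiOU ℓ m κ p SO K oU s j u) ∧
      SmLE (PhiO ℓ κ p SO K o s j u) (PhiOU ℓ m κ p SO K oU s j u) := by
  have hmono := PhiO_mono (σ := σ) (u := u) hℓ hm hκ hp1 hσ hSO hK ho hoU hle hs0 hs1 hj1 hjm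
  have hPocc := PhiO_isOcc (σ := σ) (p := p) (κ := κ) (u := u) hℓ hm hσ hSO hK hoU hs0 hs1 hj1 hjm
  unfold PhiOU
  by_cases h0 : oU 0 = 0
  · rw [if_pos h0]
    by_cases h1 : PhiO ℓ κ p SO K oU s j u 0 = 0
    · rw [if_pos h1]
      exact ⟨hPocc, hmono⟩
    · rw [if_neg h1]
      exact ⟨pi1_isOcc hℓ hPocc,
        fun n => le_trans (hmono n) (le_pi1 hPocc n)⟩
  · rw [if_neg h0]
    have hpo : isOcc ℓ m (pi1 m oU) := pi1_isOcc hℓ hoU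
    have hle2 : SmLE o (pi1 m oU) := fun n => le_trans (hle n) (le_pi1 hoU n)
    have hmono2 := PhiO_mono (σ := σ) (u := u) hℓ hm hκ hp1 hσ hSO hK ho hpo hle2 hs0 hs1 hj1 hjm
    have hPocc2 := PhiO_isOcc (σ := σ) (p := p) (κ := κ) (u := u) hℓ hm hσ hSO hK hpo hs0 hs1 hj1 hjm
    exact ⟨pi1_isOcc hℓ hPocc2,
      fun n => le_trans (hmono2 n) (le_pi1 hPocc2 n)⟩

end steps


theorem lower_upper_processes_bound
    (ℓ m κ : ℕ) (hℓ : 1 ≤ ℓ) (hm : 1 ≤ m) (hκ : 2 ≤ κ)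
    (p : ℝ) (hp : 0 < p ∧ p < 1) (σ : ℝ) (hσ : 1 ≤ σ)
    (SO : (ℕ → ℕ) → ℝ → ℕ)
    (hSO : ∀ (o : ℕ → ℕ) (s : ℝ), isOcc ℓ m o → 0 ≤ s → s < 1 →
      (∑ h ∈ Finset.range (SO o s), (o h : ℝ) * AH σ h)
          ≤ s * ∑ h ∈ Finset.range (ℓ + 1), (o h : ℝ) * AH σ h ∧
        s * (∑ h ∈ Finset.range (ℓ + 1), (o h : ℝ) * AH σ h)
          < ∑ h ∈ Finset.range (SO o s + 1), (o h : ℝ) * AH σ h)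
    (K : (ℕ → ℕ) → ℕ → ℕ)
    (hK : ∀ (o : ℕ → ℕ) (j : ℕ), isOcc ℓ m o → 1 ≤ j → j ≤ m →
      (∑ h ∈ Finset.range (K o j), o h) < j ∧
        j ≤ ∑ h ∈ Finset.range (K o j + 1), o h)
    -- the random inputs `r_n = (s_n, i_n, j_n, u_n)`
    (s : ℕ → ℝ) (i j : ℕ → ℕ) (u : ℕ → Fin ℓ → ℝ)
    (hs : ∀ n, 0 ≤ s n ∧ s n < 1) (hj : ∀ n, 1 ≤ j n ∧ j n ≤ m)
    (hu : ∀ n k, 0 ≤ u n k ∧ u n k ≤ 1)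
    -- the starting occupancy distribution
    (o : ℕ → ℕ) (ho : isOcc ℓ m o)
    -- the occupancy process and the lower and upper processes
    (O OL OU : ℕ → ℕ → ℕ)
    (hO0 : O 0 = o) (hOL0 : OL 0 = o) (hOU0 : OU 0 = o)
    (hO : ∀ n, O (n + 1) = PhiO ℓ κ p SO K (O n) (s (n + 1)) (j (n + 1)) (u (n + 1)))
    (hOL : ∀ n, OL (n + 1)
      = PhiOL ℓ m κ p SO K (OL n) (s (n + 1)) (j (n + 1)) (u (n + 1)))
    (hOU : ∀ n, OU (n + 1)
      = PhiOU ℓ m κ p SO K (OU n) (s (n + 1)) (j (n + 1)) (u (n + 1))) :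
    ∀ n, occLE (OL n) (O n) ∧ occLE (O n) (OU n) := by
  have key : ∀ n, isOcc ℓ m (OL n) ∧ isOcc ℓ m (O n) ∧ isOcc ℓ m (OU n) ∧
      SmLE (OL n) (O n) ∧ SmLE (O n) (OU n) := by
    intro n
    induction n with
    | zero =>
        rw [hO0, hOL0, hOU0]
        exact ⟨ho, ho, ho, fun _ => le_rfl, fun _ => le_rfl⟩
    | succ n ih =>
        obtain ⟨h1, h2, h3, h4, h5⟩ := ih
        rw [hO n, hOL n, hOU n]
        obtain ⟨hs0, hs1⟩ := hs (n + 1)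
        obtain ⟨hj1, hjm⟩ := hj (n + 1)
        have low := lower_step (σ := σ) (u := u (n + 1)) hℓ hm hκ hp.2 hσ hSO hK h1 h2 h4 hs0 hs1 hj1 hjm
        have up := upper_step (σ := σ) (u := u (n + 1)) hℓ hm hκ hp.2 hσ hSO hK h2 h3 h5 hs0 hs1 hj1 hjm
        exact ⟨low.1, PhiO_isOcc (σ := σ) (κ := κ) (p := p) (u := u (n+1)) hℓ hm hσ hSO hK h2 hs0 hs1 hj1 hjm,
          up.1, low.2, up.2⟩
  intro n
  exact ⟨fun l => (key n).2.2.2.1 (l + 1), fun l => (key n).2.2.2.2 (l + 1)⟩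


end
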